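/- Under the hypotheses P² = Id, J² = −Id, PJ = −JP, PG(X,Y) + G(PX,PY) = 0, and G(X,PY) + PG(X,Y) = −2JH(X,Y), one has H(X,Y) + H(PX,Y) = 0 for all X, Y. -/
import Mathlib


/-- if `P² = Id`, `J² = -Id`, `PJ = -JP`,
`PG(X,Y) + G(PX,PY) = 0`, `G(X,PY) + PG(X,Y) = -2JH(X,Y)` (and `G(X,JY) = -JG(X,Y)`),
then `H(X,Y) + H(PX,Y) = 0`. -/
theorem NK_H_PX {V : Type*} [AddCommGroup V] [Module ℝ V]
    (J P : V →ₗ[ℝ] V) (G H : V → V → V)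
    (hP2 : ∀ X, P (P X) = X)
    (hJ2 : ∀ X, J (J X) = -X)
    (hPJ : ∀ X, P (J X) = -(J (P X)))
    (hGJ : ∀ X Y, G X (J Y) = -(J (G X Y)))
    (h9 : ∀ X Y, P (G X Y) + G (P X) (P Y) = 0)
    (h11 : ∀ X Y, G X (P Y) + P (G X Y) = -((2 : ℝ) • J (H X Y))) :
    ∀ X Y, H X Y + H (P X) Y = 0 := by
  intro X Y
  have e1 := h11 X Y
  have e2 := h11 (P X) Y
  have e4 := h9 (P X) Y
  rw [hP2] at e4
  have hc : G (P X) (P Y) = -(P (G X Y)) := eq_neg_of_add_eq_zero_right (h9 X Y)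
  have hd : P (G (P X) Y) = -(G X (P Y)) := eq_neg_of_add_eq_zero_left e4
  have h5 : -((2 : ℝ) • J (H X Y)) + -((2 : ℝ) • J (H (P X) Y)) = 0 := by
    rw [← e1, ← e2, hc, hd]; abel
  have h6 : (2 : ℝ) • J (H X Y + H (P X) Y) = 0 := by
    rw [map_add, smul_add]
    have := h5
    rw [← neg_add] at this
    exact neg_eq_zero.mp this
  have h7 : J (H X Y + H (P X) Y) = 0 := by
    rcases smul_eq_zero.mp h6 with h | h
    · norm_num at h
    · exact h
  have := hJ2 (H X Y + H (P X) Y)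
  rw [h7, map_zero] at this
  exact neg_eq_zero.mp this.symm
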